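/- Let X be a compact subset of ℝ^N equipped with a finite positive Borel measure μ, and let (T_n) be a sequence of sublinear and monotone operators from C(X), the continuous real-valued functions on X, into itself. Assume that for each of the test functions h ∈ {1, pr_1, …, pr_N, −pr_1, …, −pr_N, Σ_{k=1}^N pr_k²} (restricted to X) and every ε > 0 one has μ({x ∈ X : |T_n(h)(x) − h(x)| ≥ ε}) → 0 as n → ∞. Then for every nonnegative f ∈ C(X) and every ε > 0, μ({x ∈ X : |T_n(f)(x) − f(x)| ≥ ε}) → 0 as n → ∞. -/

import Mathlib

open MeasureTheory Filter Topology Set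

/-- k-th coordinate projection as a continuous map on `X`. -/
noncomputable def korovkinProj {N : ℕ} (X : Set (Fin N → ℝ)) (k : Fin N) : C(X, ℝ) :=
  ⟨fun x => (x : Fin N → ℝ) k, (continuous_apply k).comp continuous_subtype_val⟩

/-- sum of squares of coordinates as a continuous map on `X`. -/
noncomputable def korovkinSq {N : ℕ} (X : Set (Fin N → ℝ)) : C(X, ℝ) :=
  ⟨fun x => ∑ k, ((x : Fin N → ℝ) k) ^ 2, by
    apply continuous_finset_sum
    exact fun k _ => ((continuous_apply k).comp continuous_subtype_val).pow 2⟩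

/-- pointwise subadditivity of a sublinear map over finite sums. -/
lemma korovkin_T_sum_le {Y : Type*} [TopologicalSpace Y] (T : C(Y, ℝ) → C(Y, ℝ))
    (hadd : ∀ f g : C(Y, ℝ), T (f + g) ≤ T f + T g) (h0 : T 0 = 0)
    {ι : Type*} (s : Finset ι) (g : ι → C(Y, ℝ)) (y : Y) :
    T (∑ i ∈ s, g i) y ≤ ∑ i ∈ s, T (g i) y := by
  classical
  induction s using Finset.induction with
  | empty => simp [h0]
  | insert _ _ hns ih =>
      rename_i a s
      rw [Finset.sum_insert hns, Finset.sum_insert hns]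
      have h1 := ContinuousMap.le_def.mp (hadd (g a) (∑ i ∈ s, g i)) y
      rw [ContinuousMap.add_apply] at h1
      exact h1.trans (by linarith)

set_option maxHeartbeats 1000000 in
theorem korovkin_inMeasure_nonneg {N : ℕ} (X : Set (Fin N → ℝ)) [CompactSpace X]
    (μ : Measure X) [IsFiniteMeasure μ]
    (T : ℕ → C(X, ℝ) → C(X, ℝ))
    (hsubadd : ∀ n, ∀ f g : C(X, ℝ), T n (f + g) ≤ T n f + T n g)
    (hhom : ∀ n, ∀ (α : ℝ), 0 ≤ α → ∀ f : C(X, ℝ), T n (α • f) = α • T n f)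
    (hmono : ∀ n, ∀ f g : C(X, ℝ), f ≤ g → T n f ≤ T n g)
    -- convergence in measure for each test function
    (htest : ∀ h : C(X, ℝ),
      ((⇑h = fun _ => (1 : ℝ)) ∨
        (∃ k : Fin N, ⇑h = fun x : X => (x : Fin N → ℝ) k) ∨
        (∃ k : Fin N, ⇑h = fun x : X => -((x : Fin N → ℝ) k)) ∨
        (⇑h = fun x : X => ∑ k, ((x : Fin N → ℝ) k) ^ 2)) →
      ∀ ε : ℝ, 0 < ε →
        Tendsto (fun n => μ {x | ε ≤ |T n h x - h x|}) atTop (𝓝 0))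
    (f : C(X, ℝ)) (hf : 0 ≤ f) :
    ∀ ε : ℝ, 0 < ε →
      Tendsto (fun n => μ {x | ε ≤ |T n f x - f x|}) atTop (𝓝 0) := by
  classical
  intro ε hε
  -- T n 0 = 0
  have hT0 : ∀ n, T n (0 : C(X, ℝ)) = 0 := by
    intro n
    have := hhom n 0 le_rfl 0
    simpa using this
  -- uniform continuity constant
  obtain ⟨δ, hδ, hδf⟩ := Metric.uniformContinuous_iff.mp
    (CompactSpace.uniformContinuous_of_continuous f.continuous) (ε / 2) (by positivity)
  obtain ⟨C, hCdef⟩ : ∃ C : ℝ, C = 2 * (‖f‖ + 1) / δ ^ 2 := ⟨_, rfl⟩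
  have hCpos : 0 < C := by rw [hCdef]; positivity
  have key1 : ∀ x y : X, |f y - f x| ≤
      ε / 2 + C * ∑ k, ((y : Fin N → ℝ) k - (x : Fin N → ℝ) k) ^ 2 := by
    intro x y
    have hsumnn : (0:ℝ) ≤ ∑ k, ((y : Fin N → ℝ) k - (x : Fin N → ℝ) k) ^ 2 :=
      Finset.sum_nonneg fun k _ => sq_nonneg _
    rcases lt_or_ge (dist y x) δ with hlt | hge
    · have := hδf hlt
      rw [Real.dist_eq] at this
      nlinarith [mul_nonneg hCpos.le hsumnn]
    · -- some coordinate difference is at least δ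
      have hd : ¬ dist (y : Fin N → ℝ) (x : Fin N → ℝ) < δ := by
        rw [← Subtype.dist_eq]; exact not_lt.mpr hge
      rw [dist_pi_lt_iff hδ] at hd
      push_neg at hd
      obtain ⟨k, hk⟩ := hd
      rw [Real.dist_eq] at hk
      have hk2 : δ ^ 2 ≤ ((y : Fin N → ℝ) k - (x : Fin N → ℝ) k) ^ 2 := by
        have := sq_abs ((y : Fin N → ℝ) k - (x : Fin N → ℝ) k)
        nlinarith [abs_nonneg ((y : Fin N → ℝ) k - (x : Fin N → ℝ) k)]
      have hksum : ((y : Fin N → ℝ) k - (x : Fin N → ℝ) k) ^ 2 ≤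
          ∑ j, ((y : Fin N → ℝ) j - (x : Fin N → ℝ) j) ^ 2 :=
        Finset.single_le_sum (f := fun j => ((y : Fin N → ℝ) j - (x : Fin N → ℝ) j) ^ 2)
          (fun j _ => sq_nonneg _) (Finset.mem_univ k)
      have hfy := ContinuousMap.norm_coe_le_norm f y
      have hfx := ContinuousMap.norm_coe_le_norm f x
      rw [Real.norm_eq_abs] at hfy hfx
      have hCd : C * δ ^ 2 = 2 * (‖f‖ + 1) := by
        rw [hCdef]; field_simp
      have habs : |f y - f x| ≤ 2 * ‖f‖ := by
        calc |f y - f x| ≤ |f y| + |f x| := abs_sub _ _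
          _ ≤ 2 * ‖f‖ := by linarith
      have : C * δ ^ 2 ≤ C * ∑ j, ((y : Fin N → ℝ) j - (x : Fin N → ℝ) j) ^ 2 :=
        mul_le_mul_of_nonneg_left (hk2.trans hksum) hCpos.le
      nlinarith
  -- uniform bound on coordinates
  obtain ⟨R, hRdef⟩ : ∃ R : ℝ, R = 1 + ∑ k, ‖korovkinProj X k‖ := ⟨_, rfl⟩
  have hRpos : 0 < R := by
    have : (0:ℝ) ≤ ∑ k, ‖korovkinProj X k‖ := Finset.sum_nonneg fun k _ => norm_nonneg _
    rw [hRdef]; linarith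
  have hR : ∀ (x : X) (k : Fin N), |(x : Fin N → ℝ) k| ≤ R := by
    intro x k
    have h1 : |(x : Fin N → ℝ) k| ≤ ‖korovkinProj X k‖ := by
      have := ContinuousMap.norm_coe_le_norm (korovkinProj X k) x
      rwa [Real.norm_eq_abs] at this
    have h2 : ‖korovkinProj X k‖ ≤ ∑ j, ‖korovkinProj X j‖ :=
      Finset.single_le_sum (f := fun j => ‖korovkinProj X j‖)
        (fun j _ => norm_nonneg _) (Finset.mem_univ k)
    rw [hRdef]; linarith
  obtain ⟨K, hKdef⟩ : ∃ K : ℝ, K = ε / 2 + C * ((N : ℝ) * R ^ 2 + 2 * R + 1) := ⟨_, rfl⟩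
  have hNR : (0:ℝ) ≤ (N : ℝ) * R ^ 2 := mul_nonneg (Nat.cast_nonneg N) (sq_nonneg R)
  have hKpos : 0 < K := by
    rw [hKdef]
    have : (0:ℝ) < C * ((N : ℝ) * R ^ 2 + 2 * R + 1) := by
      apply mul_pos hCpos; nlinarith
    linarith
  obtain ⟨M, hMdef⟩ : ∃ M : ℝ, M = ‖f‖ + K := ⟨_, rfl⟩
  have hMpos : 0 < M := by rw [hMdef]; have := norm_nonneg f; linarith
  -- the total deviation function
  obtain ⟨S, hSdef⟩ : ∃ S : ℕ → X → ℝ, S = fun n x =>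
      |T n 1 x - (1 : C(X, ℝ)) x| + |T n (korovkinSq X) x - korovkinSq X x| +
        ∑ k, (|T n (korovkinProj X k) x - korovkinProj X k x| +
          |T n (-korovkinProj X k) x - (-korovkinProj X k) x|) := ⟨_, rfl⟩
  have hsumnn : ∀ n (x : X), (0:ℝ) ≤ ∑ k, (|T n (korovkinProj X k) x - korovkinProj X k x| +
      |T n (-korovkinProj X k) x - (-korovkinProj X k) x|) := fun n x =>
    Finset.sum_nonneg fun k _ => add_nonneg (abs_nonneg _) (abs_nonneg _)
  have hSnn : ∀ n x, 0 ≤ S n x := by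
    intro n x
    rw [hSdef]
    have := hsumnn n x
    positivity
  -- main pointwise estimate
  have main : ∀ n (x : X), |T n f x - f x| ≤ ε / 2 + M * S n x := by
    intro n x
    obtain ⟨a, hadef⟩ : ∃ a : Fin N → ℝ,
      a = fun k => max (-(2 * (x : Fin N → ℝ) k)) 0 := ⟨_, rfl⟩
    obtain ⟨b, hbdef⟩ : ∃ b : Fin N → ℝ,
      b = fun k => max (2 * (x : Fin N → ℝ) k) 0 := ⟨_, rfl⟩
    have hann : ∀ k, 0 ≤ a k := fun k => by rw [hadef]; exact le_max_right _ _
    have hbnn : ∀ k, 0 ≤ b k := fun k => by rw [hbdef]; exact le_max_right _ _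
    have hab : ∀ k, a k - b k = -(2 * (x : Fin N → ℝ) k) := by
      intro k
      rw [hadef, hbdef]
      simp only
      rcases le_total ((x : Fin N → ℝ) k) 0 with h | h
      · rw [max_eq_left (by linarith), max_eq_right (by linarith)]; ring
      · rw [max_eq_right (by linarith), max_eq_left (by linarith)]; ring
    have haR : ∀ k, a k ≤ 2 * R := by
      intro k
      have h1 := abs_le.mp (hR x k)
      rw [hadef]
      exact max_le (by linarith [h1.1]) (by linarith [hRpos])
    have hbR : ∀ k, b k ≤ 2 * R := by
      intro k
      have h1 := abs_le.mp (hR x k)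
      rw [hbdef]
      exact max_le (by linarith [h1.2]) (by linarith [hRpos])
    obtain ⟨c₀, hc0def⟩ : ∃ c₀ : ℝ, c₀ = ε / 2 + C * ∑ k, ((x : Fin N → ℝ) k) ^ 2 := ⟨_, rfl⟩
    have hsqsum : ∑ k, ((x : Fin N → ℝ) k) ^ 2 ≤ (N : ℝ) * R ^ 2 := by
      calc ∑ k, ((x : Fin N → ℝ) k) ^ 2 ≤ ∑ _k : Fin N, R ^ 2 := by
            apply Finset.sum_le_sum
            intro k _
            have h1 := abs_le.mp (hR x k)
            nlinarith [h1.1, h1.2]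
        _ = (N : ℝ) * R ^ 2 := by simp [Finset.sum_const, mul_comm]
    have hc0nn : 0 ≤ c₀ := by
      have h0 : (0:ℝ) ≤ ∑ k, ((x : Fin N → ℝ) k) ^ 2 :=
        Finset.sum_nonneg fun k _ => sq_nonneg _
      rw [hc0def]
      nlinarith [mul_nonneg hCpos.le h0]
    have hc0K : c₀ ≤ K := by
      rw [hc0def, hKdef]
      nlinarith [mul_le_mul_of_nonneg_left hsqsum hCpos.le, hRpos, hCpos]
    have hCK : C ≤ K := by
      have hb1 : (1:ℝ) ≤ (N : ℝ) * R ^ 2 + 2 * R + 1 := by nlinarith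
      have := mul_le_mul_of_nonneg_left hb1 hCpos.le
      rw [hKdef]; linarith
    have h2RK : C * (2 * R) ≤ K := by
      have hb1 : 2 * R ≤ (N : ℝ) * R ^ 2 + 2 * R + 1 := by nlinarith
      have := mul_le_mul_of_nonneg_left hb1 hCpos.le
      rw [hKdef]; linarith
    have haK : ∀ k, C * a k ≤ K := fun k =>
      (mul_le_mul_of_nonneg_left (haR k) hCpos.le).trans h2RK
    have hbK : ∀ k, C * b k ≤ K := fun k =>
      (mul_le_mul_of_nonneg_left (hbR k) hCpos.le).trans h2RK
    obtain ⟨G, hGdef⟩ : ∃ G : Fin N → C(X, ℝ), G = fun k =>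
      (C * a k) • korovkinProj X k + (C * b k) • (-korovkinProj X k) := ⟨_, rfl⟩
    obtain ⟨g, hgdef⟩ : ∃ g : C(X, ℝ),
      g = c₀ • (1 : C(X, ℝ)) + C • korovkinSq X + ∑ k, G k := ⟨_, rfl⟩
    -- evaluation formula for g
    have hgy : ∀ y : X, g y = ε / 2 + C * ∑ k, ((y : Fin N → ℝ) k - (x : Fin N → ℝ) k) ^ 2 := by
      intro y
      have e1 : ∑ k, ((y : Fin N → ℝ) k - (x : Fin N → ℝ) k) ^ 2 =
          ∑ k, ((y : Fin N → ℝ) k) ^ 2 +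
            (∑ k, a k * (y : Fin N → ℝ) k - ∑ k, b k * (y : Fin N → ℝ) k) +
            ∑ k, ((x : Fin N → ℝ) k) ^ 2 := by
        rw [← Finset.sum_sub_distrib, ← Finset.sum_add_distrib, ← Finset.sum_add_distrib]
        refine Finset.sum_congr rfl fun k _ => ?_
        have h := hab k
        linear_combination (-(y : Fin N → ℝ) k) * h
      have e2 : g y = c₀ + C * (∑ k, ((y : Fin N → ℝ) k) ^ 2) +
          ∑ k, (C * a k * (y : Fin N → ℝ) k + C * b k * (-(y : Fin N → ℝ) k)) := by
        rw [hgdef]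
        simp [ContinuousMap.sum_apply, hGdef, korovkinProj, korovkinSq, smul_eq_mul]
      have e3 : ∑ k, (C * a k * (y : Fin N → ℝ) k + C * b k * (-(y : Fin N → ℝ) k)) =
          C * (∑ k, a k * (y : Fin N → ℝ) k - ∑ k, b k * (y : Fin N → ℝ) k) := by
        rw [← Finset.sum_sub_distrib, Finset.mul_sum]
        exact Finset.sum_congr rfl fun k _ => by ring
      rw [e2, e3, e1, hc0def]
      ring
    have hgx : g x = ε / 2 := by
      rw [hgy x]
      simp
    -- pointwise values of f
    have hfx0 : 0 ≤ f x := by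
      have := ContinuousMap.le_def.mp hf x
      simpa using this
    have hfxn : f x ≤ ‖f‖ := by
      have := ContinuousMap.norm_coe_le_norm f x
      rw [Real.norm_eq_abs] at this
      exact (le_abs_self _).trans this
    -- comparison inequalities
    have hup : f ≤ (f x) • (1 : C(X, ℝ)) + g := by
      rw [ContinuousMap.le_def]
      intro y
      rw [ContinuousMap.add_apply, ContinuousMap.smul_apply, ContinuousMap.one_apply,
        smul_eq_mul, mul_one, hgy y]
      have h1 := key1 x y
      have h2 := le_abs_self (f y - f x)
      linarith
    have hlo : (f x) • (1 : C(X, ℝ)) ≤ f + g := by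
      rw [ContinuousMap.le_def]
      intro y
      rw [ContinuousMap.add_apply, ContinuousMap.smul_apply, ContinuousMap.one_apply,
        smul_eq_mul, mul_one, hgy y]
      have h1 := key1 x y
      have h2 := neg_abs_le (f y - f x)
      linarith
    have h3 : T n ((f x) • (1 : C(X, ℝ))) = (f x) • T n 1 := hhom n (f x) hfx0 1
    have hTup : T n f x ≤ f x * T n 1 x + T n g x := by
      have h1 := ContinuousMap.le_def.mp (hmono n _ _ hup) x
      have h2 := ContinuousMap.le_def.mp (hsubadd n ((f x) • (1 : C(X, ℝ))) g) x
      rw [ContinuousMap.add_apply, h3, ContinuousMap.smul_apply, smul_eq_mul] at h2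
      linarith
    have hTlo : f x * T n 1 x ≤ T n f x + T n g x := by
      have h1 := ContinuousMap.le_def.mp (hmono n _ _ hlo) x
      have h2 := ContinuousMap.le_def.mp (hsubadd n f g) x
      rw [h3] at h1
      rw [ContinuousMap.smul_apply, smul_eq_mul] at h1
      rw [ContinuousMap.add_apply] at h2
      linarith
    -- bound for T n g x
    have hterm : ∀ (c t : ℝ), 0 ≤ c → c ≤ K → c * t ≤ K * |t| := by
      intro c t hc hcK
      calc c * t ≤ c * |t| := mul_le_mul_of_nonneg_left (le_abs_self t) hc
        _ ≤ K * |t| := mul_le_mul_of_nonneg_right hcK (abs_nonneg t)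
    have hTg : T n g x ≤ ε / 2 + K * S n x := by
      have t1 : T n g x ≤ T n (c₀ • (1 : C(X, ℝ)) + C • korovkinSq X) x + T n (∑ k, G k) x := by
        have h2 := ContinuousMap.le_def.mp
          (hsubadd n (c₀ • (1 : C(X, ℝ)) + C • korovkinSq X) (∑ k, G k)) x
        rw [ContinuousMap.add_apply] at h2
        rw [hgdef]
        exact h2
      have t2 : T n (c₀ • (1 : C(X, ℝ)) + C • korovkinSq X) x ≤
          c₀ * T n 1 x + C * T n (korovkinSq X) x := by
        have h2 := ContinuousMap.le_def.mp
          (hsubadd n (c₀ • (1 : C(X, ℝ))) (C • korovkinSq X)) x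
        rw [ContinuousMap.add_apply, hhom n c₀ hc0nn, hhom n C hCpos.le,
          ContinuousMap.smul_apply, ContinuousMap.smul_apply, smul_eq_mul, smul_eq_mul] at h2
        exact h2
      have t3 : T n (∑ k, G k) x ≤ ∑ k, T n (G k) x :=
        korovkin_T_sum_le (T n) (hsubadd n) (hT0 n) Finset.univ G x
      have t4 : ∀ k, T n (G k) x ≤
          (C * a k) * T n (korovkinProj X k) x + (C * b k) * T n (-korovkinProj X k) x := by
        intro k
        have h2 := ContinuousMap.le_def.mp
          (hsubadd n ((C * a k) • korovkinProj X k) ((C * b k) • (-korovkinProj X k))) x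
        rw [ContinuousMap.add_apply, hhom n _ (mul_nonneg hCpos.le (hann k)),
          hhom n _ (mul_nonneg hCpos.le (hbnn k)),
          ContinuousMap.smul_apply, ContinuousMap.smul_apply, smul_eq_mul, smul_eq_mul] at h2
        rw [hGdef]
        exact h2
      have t5 : ∑ k, T n (G k) x ≤
          ∑ k, ((C * a k) * T n (korovkinProj X k) x + (C * b k) * T n (-korovkinProj X k) x) :=
        Finset.sum_le_sum fun k _ => t4 k
      -- the value identity
      have hexp : g x = c₀ * (1 : C(X, ℝ)) x + C * korovkinSq X x +
          ∑ k, ((C * a k) * korovkinProj X k x + (C * b k) * (-korovkinProj X k) x) := by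
        rw [hgdef]
        simp [ContinuousMap.sum_apply, hGdef, smul_eq_mul]
      have hsplit : ∑ k, ((C * a k) * T n (korovkinProj X k) x
            + (C * b k) * T n (-korovkinProj X k) x) =
          ∑ k, ((C * a k) * korovkinProj X k x + (C * b k) * (-korovkinProj X k) x) +
          ∑ k, ((C * a k) * (T n (korovkinProj X k) x - korovkinProj X k x) +
            (C * b k) * (T n (-korovkinProj X k) x - (-korovkinProj X k) x)) := by
        rw [← Finset.sum_add_distrib]
        exact Finset.sum_congr rfl fun k _ => by ring
      have hbdd : ∑ k, ((C * a k) * (T n (korovkinProj X k) x - korovkinProj X k x) +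
            (C * b k) * (T n (-korovkinProj X k) x - (-korovkinProj X k) x)) ≤
          ∑ k, (K * |T n (korovkinProj X k) x - korovkinProj X k x| +
            K * |T n (-korovkinProj X k) x - (-korovkinProj X k) x|) := by
        refine Finset.sum_le_sum fun k _ => ?_
        exact add_le_add (hterm _ _ (mul_nonneg hCpos.le (hann k)) (haK k))
          (hterm _ _ (mul_nonneg hCpos.le (hbnn k)) (hbK k))
      have h1b : c₀ * (T n 1 x - (1 : C(X, ℝ)) x) ≤ K * |T n 1 x - (1 : C(X, ℝ)) x| :=
        hterm _ _ hc0nn hc0K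
      have h2b : C * (T n (korovkinSq X) x - korovkinSq X x) ≤
          K * |T n (korovkinSq X) x - korovkinSq X x| := hterm _ _ hCpos.le hCK
      have hKS : K * S n x = K * |T n 1 x - (1 : C(X, ℝ)) x| +
          K * |T n (korovkinSq X) x - korovkinSq X x| +
          ∑ k, (K * |T n (korovkinProj X k) x - korovkinProj X k x| +
            K * |T n (-korovkinProj X k) x - (-korovkinProj X k) x|) := by
        rw [hSdef]
        simp only
        rw [mul_add, mul_add, Finset.mul_sum]
        congr 1
        exact Finset.sum_congr rfl fun k _ => by rw [mul_add]
      rw [hgx] at hexp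
      rw [hsplit] at t5
      rw [hKS]
      have hc1 : c₀ * T n 1 x = c₀ * (1 : C(X, ℝ)) x + c₀ * (T n 1 x - (1 : C(X, ℝ)) x) := by ring
      have hc2 : C * T n (korovkinSq X) x = C * korovkinSq X x +
          C * (T n (korovkinSq X) x - korovkinSq X x) := by ring
      linarith
    -- conclusion of pointwise estimate
    have hd1S : |T n 1 x - (1 : C(X, ℝ)) x| ≤ S n x := by
      rw [hSdef]
      have h1 := hsumnn n x
      have := abs_nonneg (T n (korovkinSq X) x - korovkinSq X x)
      simp only
      linarith
    have honex : (1 : C(X, ℝ)) x = 1 := rfl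
    have hfdS : ‖f‖ * |T n 1 x - (1 : C(X, ℝ)) x| ≤ ‖f‖ * S n x :=
      mul_le_mul_of_nonneg_left hd1S (norm_nonneg f)
    have hfup : f x * (T n 1 x - 1) ≤ ‖f‖ * |T n 1 x - (1 : C(X, ℝ)) x| := by
      rw [honex]
      calc f x * (T n 1 x - 1) ≤ f x * |T n 1 x - 1| :=
            mul_le_mul_of_nonneg_left (le_abs_self _) hfx0
        _ ≤ ‖f‖ * |T n 1 x - 1| :=
            mul_le_mul_of_nonneg_right hfxn (abs_nonneg _)
    have hflo : f x * (1 - T n 1 x) ≤ ‖f‖ * |T n 1 x - (1 : C(X, ℝ)) x| := by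
      rw [honex]
      calc f x * (1 - T n 1 x) ≤ f x * |1 - T n 1 x| :=
            mul_le_mul_of_nonneg_left (le_abs_self _) hfx0
        _ ≤ ‖f‖ * |1 - T n 1 x| :=
            mul_le_mul_of_nonneg_right hfxn (abs_nonneg _)
        _ = ‖f‖ * |T n 1 x - 1| := by rw [abs_sub_comm]
    have hMS : M * S n x = ‖f‖ * S n x + K * S n x := by rw [hMdef]; ring
    rw [abs_le]
    constructor
    · nlinarith [hTlo, hTg, hflo, hfdS, hd1S]
    · nlinarith [hTup, hTg, hfup, hfdS, hd1S]
  -- threshold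
  obtain ⟨η, hηdef⟩ : ∃ η : ℝ, η = ε / (2 * M * (2 * (N : ℝ) + 2)) := ⟨_, rfl⟩
  have hηpos : 0 < η := by
    rw [hηdef]
    have : (0:ℝ) < 2 * M * (2 * (N : ℝ) + 2) := by positivity
    positivity
  have hηε : M * ((2 * (N : ℝ) + 2) * η) = ε / 2 := by
    rw [hηdef]
    field_simp
  -- inclusion of the bad set in the union of bad sets for the test functions
  have hsub : ∀ n, {x : X | ε ≤ |T n f x - f x|} ⊆
      ({x : X | η ≤ |T n 1 x - (1 : C(X, ℝ)) x|} ∪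
        {x : X | η ≤ |T n (korovkinSq X) x - korovkinSq X x|}) ∪
      ((⋃ k, {x : X | η ≤ |T n (korovkinProj X k) x - korovkinProj X k x|}) ∪
        (⋃ k, {x : X | η ≤ |T n (-korovkinProj X k) x - (-korovkinProj X k) x|})) := by
    intro n x hx
    simp only [Set.mem_setOf_eq] at hx
    by_contra hcon
    simp only [Set.mem_union, Set.mem_iUnion, Set.mem_setOf_eq, not_or, not_exists,
      not_le] at hcon
    obtain ⟨⟨h1, h2⟩, h3, h4⟩ := hcon
    -- S n x is small
    have hSsmall : S n x < (2 * (N : ℝ) + 2) * η := by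
      have hsum : ∑ k, (|T n (korovkinProj X k) x - korovkinProj X k x| +
          |T n (-korovkinProj X k) x - (-korovkinProj X k) x|) ≤
          ∑ _k : Fin N, (2 * η) := by
        refine Finset.sum_le_sum fun k _ => ?_
        have := h3 k
        have := h4 k
        linarith
      rw [Finset.sum_const, Finset.card_univ, Fintype.card_fin, nsmul_eq_mul] at hsum
      rw [hSdef]
      simp only
      linarith
    -- but the main estimate forces it to be large
    have h5 := main n x
    have h6 : ε / 2 ≤ M * S n x := by linarith
    have h7 : M * ((2 * (N : ℝ) + 2) * η) ≤ M * S n x := by rw [hηε]; exact h6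
    have h8 : (2 * (N : ℝ) + 2) * η ≤ S n x :=
      le_of_mul_le_mul_left h7 hMpos
    linarith
  -- convergence for each test function
  have hone : Tendsto (fun n => μ {x : X | η ≤ |T n 1 x - (1 : C(X, ℝ)) x|}) atTop (𝓝 0) := by
    refine htest 1 (Or.inl ?_) η hηpos
    funext y
    simp
  have hsq : Tendsto (fun n => μ {x : X | η ≤ |T n (korovkinSq X) x - korovkinSq X x|})
      atTop (𝓝 0) := by
    refine htest (korovkinSq X) (Or.inr (Or.inr (Or.inr rfl))) η hηpos
  have hproj : ∀ k, Tendsto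
      (fun n => μ {x : X | η ≤ |T n (korovkinProj X k) x - korovkinProj X k x|})
      atTop (𝓝 0) := by
    intro k
    exact htest (korovkinProj X k) (Or.inr (Or.inl ⟨k, rfl⟩)) η hηpos
  have hnproj : ∀ k, Tendsto
      (fun n => μ {x : X | η ≤ |T n (-korovkinProj X k) x - (-korovkinProj X k) x|})
      atTop (𝓝 0) := by
    intro k
    refine htest (-korovkinProj X k) (Or.inr (Or.inr (Or.inl ⟨k, ?_⟩))) η hηpos
    funext y
    simp [korovkinProj]
  -- subadditivity of the measure
  have hbound : ∀ n, μ {x : X | ε ≤ |T n f x - f x|} ≤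
      (μ {x : X | η ≤ |T n 1 x - (1 : C(X, ℝ)) x|} +
        μ {x : X | η ≤ |T n (korovkinSq X) x - korovkinSq X x|}) +
      ((∑ k, μ {x : X | η ≤ |T n (korovkinProj X k) x - korovkinProj X k x|}) +
        (∑ k, μ {x : X | η ≤ |T n (-korovkinProj X k) x - (-korovkinProj X k) x|})) := by
    intro n
    refine (measure_mono (hsub n)).trans ?_
    refine (measure_union_le _ _).trans ?_
    gcongr
    · exact measure_union_le _ _
    · refine (measure_union_le _ _).trans ?_
      gcongr
      · exact measure_iUnion_fintype_le μ _
      · exact measure_iUnion_fintype_le μ _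
  -- the bounding sequence tends to zero
  have hlim : Tendsto (fun n =>
      (μ {x : X | η ≤ |T n 1 x - (1 : C(X, ℝ)) x|} +
        μ {x : X | η ≤ |T n (korovkinSq X) x - korovkinSq X x|}) +
      ((∑ k, μ {x : X | η ≤ |T n (korovkinProj X k) x - korovkinProj X k x|}) +
        (∑ k, μ {x : X | η ≤ |T n (-korovkinProj X k) x - (-korovkinProj X k) x|})))
      atTop (𝓝 0) := by
    have l1 := (hone.add hsq).add
      ((tendsto_finset_sum Finset.univ fun k _ => hproj k).add
        (tendsto_finset_sum Finset.univ fun k _ => hnproj k))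
    simpa using l1
  exact tendsto_of_tendsto_of_tendsto_of_le_of_le tendsto_const_nhds hlim
    (fun n => zero_le) hbound
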